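/- arXiv:1710.02066 — 2 statements merged into one kernel-verified Lean document; each statement's English description precedes it below -/
import Mathlib

section
/- For all positive parameters m, M_H, M_T, l, r > 0 and every configuration q = (q₁,q₂,q₃) ∈ ℝ³, the inertia matrix 𝕀(q) of the three-link planar biped is symmetric positive definite; in particular its leading principal minors are positive, the third one satisfying det 𝕀(q) ≥ (m r²/4)·(M_T l²)·(r²(4M_H + m)/4) > 0. -/
set_option maxHeartbeats 1000000

/-- Positivity of a quadratic form in three variables via leading principal minors. -/
lemma quad_pos_aux (a e f b d x y z : ℝ) (he : 0 < e) (hf : 0 < f)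
    (h3 : 0 < (a*e - b^2)*f - e*d^2)
    (hx : x ≠ 0 ∨ y ≠ 0 ∨ z ≠ 0) :
    0 < a*x^2 + e*y^2 + f*z^2 + 2*b*x*y + 2*d*x*z := by
  have key : e*f*(a*x^2 + e*y^2 + f*z^2 + 2*b*x*y + 2*d*x*z)
      = f*(e*y + b*x)^2 + e*(f*z + d*x)^2 + ((a*e - b^2)*f - e*d^2)*x^2 := by ring
  have hef : 0 < e*f := mul_pos he hf
  have hpos : 0 < e*f*(a*x^2 + e*y^2 + f*z^2 + 2*b*x*y + 2*d*x*z) := by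
    rw [key]
    rcases hx with hx | hy | hz
    · have : 0 < ((a*e - b^2)*f - e*d^2)*x^2 := mul_pos h3 (by positivity)
      nlinarith [mul_nonneg hf.le (sq_nonneg (e*y + b*x)),
        mul_nonneg he.le (sq_nonneg (f*z + d*x))]
    · rcases eq_or_ne x 0 with h0 | h0
      · rw [h0]
        have h1 : 0 < f*(e*y + b*0)^2 := by
          apply mul_pos hf
          have : e*y + b*0 ≠ 0 := by simpa using mul_ne_zero he.ne' hy
          positivity
        nlinarith [mul_nonneg he.le (sq_nonneg (f*z + d*0)),
          mul_nonneg (le_of_lt h3) (sq_nonneg (0:ℝ))]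
      · have : 0 < ((a*e - b^2)*f - e*d^2)*x^2 := mul_pos h3 (by positivity)
        nlinarith [mul_nonneg hf.le (sq_nonneg (e*y + b*x)),
          mul_nonneg he.le (sq_nonneg (f*z + d*x))]
    · rcases eq_or_ne x 0 with h0 | h0
      · rw [h0]
        have h1 : 0 < e*(f*z + d*0)^2 := by
          apply mul_pos he
          have : f*z + d*0 ≠ 0 := by simpa using mul_ne_zero hf.ne' hz
          positivity
        nlinarith [mul_nonneg hf.le (sq_nonneg (e*y + b*0)),
          mul_nonneg (le_of_lt h3) (sq_nonneg (0:ℝ))]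
      · have : 0 < ((a*e - b^2)*f - e*d^2)*x^2 := mul_pos h3 (by positivity)
        nlinarith [mul_nonneg hf.le (sq_nonneg (e*y + b*x)),
          mul_nonneg he.le (sq_nonneg (f*z + d*x))]
  nlinarith [hef, hpos]

/-- Inertia matrix of the three-link planar biped. -/
noncomputable def Imat (m MH MT l r : ℝ) (q : Fin 3 → ℝ) : Matrix (Fin 3) (Fin 3) ℝ :=
  !![(4*MH + 4*MT + 5*m)*r^2/4, -(m*r^2/2)*Real.cos (q 0 - q 1), MT*l*r*Real.cos (q 0 - q 2);
     -(m*r^2/2)*Real.cos (q 0 - q 1), m*r^2/4, 0;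
     MT*l*r*Real.cos (q 0 - q 2), 0, MT*l^2]

/-- For all positive parameters and every configuration, the inertia matrix is symmetric
positive definite; in particular its leading principal minors are positive, the third one
satisfying `det 𝕀(q) ≥ (m r²/4)·(M_T l²)·(r²(4M_H + m)/4) > 0`. -/
theorem inertia_posdef (m MH MT l r : ℝ) (hm : 0 < m) (hMH : 0 < MH) (hMT : 0 < MT)
    (hl : 0 < l) (hr : 0 < r) (q : Fin 3 → ℝ) :
    (Imat m MH MT l r q).IsSymm ∧
    (Imat m MH MT l r q).PosDef ∧
    0 < Imat m MH MT l r q 0 0 ∧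
    0 < Imat m MH MT l r q 0 0 * Imat m MH MT l r q 1 1
        - Imat m MH MT l r q 0 1 * Imat m MH MT l r q 1 0 ∧
    0 < (Imat m MH MT l r q).det ∧
    (Imat m MH MT l r q).det ≥ (m*r^2/4) * (MT*l^2) * (r^2*(4*MH + m)/4) ∧
    0 < (m*r^2/4) * (MT*l^2) * (r^2*(4*MH + m)/4) := by
  have hc1 : Real.cos (q 0 - q 1) ^ 2 ≤ 1 := Real.cos_sq_le_one _
  have hc2 : Real.cos (q 0 - q 2) ^ 2 ≤ 1 := Real.cos_sq_le_one _
  set c1 := Real.cos (q 0 - q 1) with hc1def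
  set c2 := Real.cos (q 0 - q 2) with hc2def
  have hr2 : 0 < r^2 := by positivity
  have hl2 : 0 < l^2 := by positivity
  have hsymm : (Imat m MH MT l r q).IsSymm := by
    rw [Matrix.IsSymm]
    ext i j
    fin_cases i <;> fin_cases j <;> simp [Imat]
  have hdet : (Imat m MH MT l r q).det =
      (m*r^2/4) * (MT*l^2) * (r^2*(4*MH + m)/4)
        + MT*l^2*m*r^2*r^2/4 * (m*(1-c1^2) + MT*(1-c2^2)) := by
    rw [Matrix.det_fin_three]
    simp [Imat]
    ring
  have hrest : 0 ≤ MT*l^2*m*r^2*r^2/4 * (m*(1-c1^2) + MT*(1-c2^2)) := by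
    apply mul_nonneg (by positivity)
    have h1 : 0 ≤ m*(1-c1^2) := mul_nonneg hm.le (by linarith)
    have h2 : 0 ≤ MT*(1-c2^2) := mul_nonneg hMT.le (by linarith)
    linarith
  have hlast : 0 < (m*r^2/4) * (MT*l^2) * (r^2*(4*MH + m)/4) := by positivity
  have hdetge : (Imat m MH MT l r q).det ≥ (m*r^2/4) * (MT*l^2) * (r^2*(4*MH + m)/4) := by
    rw [hdet]; linarith
  have hdetpos : 0 < (Imat m MH MT l r q).det := lt_of_lt_of_le hlast hdetge
  have h3 : 0 < ((4*MH + 4*MT + 5*m)*r^2/4 * (m*r^2/4) - (-(m*r^2/2)*c1)^2) * (MT*l^2)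
      - (m*r^2/4) * (MT*l*r*c2)^2 := by
    have heq : ((4*MH + 4*MT + 5*m)*r^2/4 * (m*r^2/4) - (-(m*r^2/2)*c1)^2) * (MT*l^2)
        - (m*r^2/4) * (MT*l*r*c2)^2
        = (m*r^2/4) * (MT*l^2) * (r^2*(4*MH + m)/4)
          + MT*l^2*m*r^2*r^2/4 * (m*(1-c1^2) + MT*(1-c2^2)) := by ring
    rw [heq]; linarith
  refine ⟨hsymm, Matrix.posDef_iff_dotProduct_mulVec.mpr ⟨?_, ?_⟩, ?_, ?_, hdetpos, hdetge, hlast⟩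
  · rw [Matrix.IsHermitian]
    ext i j
    fin_cases i <;> fin_cases j <;> simp [Imat]
  · intro x hx
    have hQ : dotProduct (star x) ((Imat m MH MT l r q).mulVec x) =
        (4*MH + 4*MT + 5*m)*r^2/4 * (x 0)^2 + m*r^2/4 * (x 1)^2 + MT*l^2 * (x 2)^2
          + 2*(-(m*r^2/2)*c1) * (x 0) * (x 1) + 2*(MT*l*r*c2) * (x 0) * (x 2) := by
      simp [Imat, Matrix.mulVec, dotProduct, Fin.sum_univ_three]
      ring
    have hor : x 0 ≠ 0 ∨ x 1 ≠ 0 ∨ x 2 ≠ 0 := by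
      by_contra h
      push_neg at h
      apply hx
      ext i; fin_cases i
      · exact h.1
      · exact h.2.1
      · exact h.2.2
    have he : 0 < m*r^2/4 := by positivity
    have hf : 0 < MT*l^2 := by positivity
    have := quad_pos_aux ((4*MH + 4*MT + 5*m)*r^2/4) (m*r^2/4) (MT*l^2)
      (-(m*r^2/2)*c1) (MT*l*r*c2) (x 0) (x 1) (x 2) he hf h3 hor
    calc (0:ℝ) < _ := this
    _ = dotProduct (star x) ((Imat m MH MT l r q).mulVec x) := by rw [hQ]
  · show (0:ℝ) < Imat m MH MT l r q 0 0
    simp [Imat]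
    positivity
  · have h2 : Imat m MH MT l r q 0 0 * Imat m MH MT l r q 1 1
        - Imat m MH MT l r q 0 1 * Imat m MH MT l r q 1 0
        = m*r^2/4 * ((4*MH + 4*MT + m)*r^2/4) + m*r^2/4 * (m*r^2*(1-c1^2)) := by
      simp [Imat]; ring
    rw [h2]
    have ha : 0 ≤ m*r^2/4 * (m*r^2*(1-c1^2)) := by
      apply mul_nonneg (by positivity)
      apply mul_nonneg (by positivity)
      linarith
    have hb : 0 < m*r^2/4 * ((4*MH + 4*MT + m)*r^2/4) := by positivity
    linarith
end

section
/- For every twice differentiable curve q : ℝ → ℝ³ and every t ∈ ℝ, the Euler–Lagrange expression of the kinetic Lagrangian L(q,q̇) = (1/2) q̇ᵀ 𝕀(q) q̇ equals the stated covariant acceleration: for each i ∈ {1,2,3}, d/dt ( ∑ⱼ 𝕀(q(t))ᵢⱼ q̇ⱼ(t) ) − (1/2) ∂/∂qᵢ ( q̇(t)ᵀ 𝕀(q) q̇(t) )|_{q = q(t)} = ( 𝕀(q(t)) q̈(t) + Γ(q(t),q̇(t)) q̇(t) )ᵢ. That is, the matrix Γ gives exactly the Christoffel (quadratic-velocity)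 forces of the Levi-Civita connection of 𝕀. -/
/-- Christoffel (quadratic-velocity) matrix `Γ(q,q̇)` of the three-link planar biped. -/
noncomputable def Gammamat (m MT l r : ℝ) (q v : Fin 3 → ℝ) : Matrix (Fin 3) (Fin 3) ℝ :=
  !![0, -(m*r^2/2)*Real.sin (q 0 - q 1) * v 1, MT*l*r*Real.sin (q 0 - q 2) * v 2;
     (m*r^2/2)*Real.sin (q 0 - q 1) * v 0, 0, 0;
     -(MT*l*r)*Real.sin (q 0 - q 2) * v 0, 0, 0]

/-- For every twice differentiable curve `q : ℝ → ℝ³`, the Euler–Lagrange expression of the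
kinetic Lagrangian `L = (1/2) q̇ᵀ 𝕀(q) q̇` equals the covariant acceleration
`(𝕀(q) q̈ + Γ(q,q̇) q̇)ᵢ`: the matrix `Γ` gives exactly the Christoffel (quadratic-velocity)
forces of the Levi-Civita connection of `𝕀`. -/
theorem euler_lagrange_eq_covariant_accel (m MH MT l r : ℝ)
    (hm : 0 < m) (hMH : 0 < MH) (hMT : 0 < MT) (hl : 0 < l) (hr : 0 < r)
    (q : ℝ → Fin 3 → ℝ) (hq : ContDiff ℝ 2 q) (t : ℝ) (i : Fin 3) :
    deriv (fun s => ∑ j, Imat m MH MT l r (q s) i j * deriv q s j) t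
      - (1/2) * deriv (fun a => ∑ i', ∑ j,
          Imat m MH MT l r (Function.update (q t) i a) i' j * deriv q t i' * deriv q t j)
          (q t i)
    = (∑ j, Imat m MH MT l r (q t) i j * deriv (deriv q) t j)
      + (∑ j, Gammamat m MT l r (q t) (deriv q t) i j * deriv q t j) := by
  have hq1 : Differentiable ℝ q := hq.differentiable (by norm_num)
  have hdq : Differentiable ℝ (deriv q) := by
    have h2 : ContDiff ℝ ((1:ℕ∞) + 1) q := by exact_mod_cast hq
    exact ((contDiff_succ_iff_deriv.mp h2).2.2).differentiable (by simp)
  have hv : ∀ j s, HasDerivAt (fun s => q s j) (deriv q s j) s := fun j s =>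
    hasDerivAt_pi.mp (hq1 s).hasDerivAt j
  have hw : ∀ j, HasDerivAt (fun s => deriv q s j) (deriv (deriv q) t j) t := fun j =>
    hasDerivAt_pi.mp (hdq t).hasDerivAt j
  have hc01 : HasDerivAt (fun s => Real.cos (q s 0 - q s 1))
      (-Real.sin (q t 0 - q t 1) * (deriv q t 0 - deriv q t 1)) t :=
    ((hv 0 t).sub (hv 1 t)).cos
  have hc02 : HasDerivAt (fun s => Real.cos (q s 0 - q s 2))
      (-Real.sin (q t 0 - q t 2) * (deriv q t 0 - deriv q t 2)) t :=
    ((hv 0 t).sub (hv 2 t)).cos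
  fin_cases i
  · -- i = 0
    simp only [Fin.zero_eta, Fin.mk_one, Fin.reduceFinMk]
    have e1 : (fun s => ∑ j, Imat m MH MT l r (q s) (0 : Fin 3) j * deriv q s j)
        = fun s => ((4*MH + 4*MT + 5*m)*r^2/4) * deriv q s 0
            + (-(m*r^2/2)) * (Real.cos (q s 0 - q s 1) * deriv q s 1)
            + (MT*l*r) * (Real.cos (q s 0 - q s 2) * deriv q s 2) := by
      funext s; simp [Imat, Fin.sum_univ_three]; ring
    have H1 := (((hw 0).const_mul ((4*MH + 4*MT + 5*m)*r^2/4)).add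
        ((hc01.mul (hw 1)).const_mul (-(m*r^2/2)))).add
        ((hc02.mul (hw 2)).const_mul (MT*l*r))
    have e2 : (fun a => ∑ i', ∑ j,
          Imat m MH MT l r (Function.update (q t) (0 : Fin 3) a) i' j
            * deriv q t i' * deriv q t j)
        = fun a => (((4*MH + 4*MT + 5*m)*r^2/4) * deriv q t 0 * deriv q t 0
              + m*r^2/4 * deriv q t 1 * deriv q t 1 + MT*l^2 * deriv q t 2 * deriv q t 2)
            + (-(m*r^2) * (deriv q t 0 * deriv q t 1)) * Real.cos (a - q t 1)
            + (2*MT*l*r * (deriv q t 0 * deriv q t 2)) * Real.cos (a - q t 2) := by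
      funext a; simp [Imat, Fin.sum_univ_three, Function.update]; ring
    have hca1 : HasDerivAt (fun a => Real.cos (a - q t 1))
        (-Real.sin (q t 0 - q t 1) * 1) (q t 0) :=
      ((hasDerivAt_id (q t 0)).sub_const (q t 1)).cos
    have hca2 : HasDerivAt (fun a => Real.cos (a - q t 2))
        (-Real.sin (q t 0 - q t 2) * 1) (q t 0) :=
      ((hasDerivAt_id (q t 0)).sub_const (q t 2)).cos
    have H2 := ((hasDerivAt_const (q t 0)
          (((4*MH + 4*MT + 5*m)*r^2/4) * deriv q t 0 * deriv q t 0
              + m*r^2/4 * deriv q t 1 * deriv q t 1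
              + MT*l^2 * deriv q t 2 * deriv q t 2)).add
        (hca1.const_mul (-(m*r^2) * (deriv q t 0 * deriv q t 1)))).add
        (hca2.const_mul (2*MT*l*r * (deriv q t 0 * deriv q t 2)))
    simp only [Pi.add_def, Pi.mul_def] at H1 H2
    rw [e1, H1.deriv, e2, H2.deriv]
    simp [Imat, Gammamat, Fin.sum_univ_three]
    ring
  · -- i = 1
    simp only [Fin.zero_eta, Fin.mk_one, Fin.reduceFinMk]
    have e1 : (fun s => ∑ j, Imat m MH MT l r (q s) (1 : Fin 3) j * deriv q s j)
        = fun s => (-(m*r^2/2)) * (Real.cos (q s 0 - q s 1) * deriv q s 0)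
            + (m*r^2/4) * deriv q s 1 := by
      funext s; simp [Imat, Fin.sum_univ_three]; ring
    have H1 := ((hc01.mul (hw 0)).const_mul (-(m*r^2/2))).add
        ((hw 1).const_mul (m*r^2/4))
    have e2 : (fun a => ∑ i', ∑ j,
          Imat m MH MT l r (Function.update (q t) (1 : Fin 3) a) i' j
            * deriv q t i' * deriv q t j)
        = fun a => (((4*MH + 4*MT + 5*m)*r^2/4) * deriv q t 0 * deriv q t 0
              + m*r^2/4 * deriv q t 1 * deriv q t 1 + MT*l^2 * deriv q t 2 * deriv q t 2
              + 2*MT*l*r * Real.cos (q t 0 - q t 2) * (deriv q t 0 * deriv q t 2))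
            + (-(m*r^2) * (deriv q t 0 * deriv q t 1)) * Real.cos (q t 0 - a) := by
      funext a; simp [Imat, Fin.sum_univ_three, Function.update]; ring
    have hca1 : HasDerivAt (fun a => Real.cos (q t 0 - a))
        (-Real.sin (q t 0 - q t 1) * (-1)) (q t 1) :=
      ((hasDerivAt_id (q t 1)).const_sub (q t 0)).cos
    have H2 := (hasDerivAt_const (q t 1)
          (((4*MH + 4*MT + 5*m)*r^2/4) * deriv q t 0 * deriv q t 0
              + m*r^2/4 * deriv q t 1 * deriv q t 1
              + MT*l^2 * deriv q t 2 * deriv q t 2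
              + 2*MT*l*r * Real.cos (q t 0 - q t 2) * (deriv q t 0 * deriv q t 2))).add
        (hca1.const_mul (-(m*r^2) * (deriv q t 0 * deriv q t 1)))
    simp only [Pi.add_def, Pi.mul_def] at H1 H2
    rw [e1, H1.deriv, e2, H2.deriv]
    simp [Imat, Gammamat, Fin.sum_univ_three]
    ring
  · -- i = 2
    simp only [Fin.zero_eta, Fin.mk_one, Fin.reduceFinMk]
    have e1 : (fun s => ∑ j, Imat m MH MT l r (q s) (2 : Fin 3) j * deriv q s j)
        = fun s => (MT*l*r) * (Real.cos (q s 0 - q s 2) * deriv q s 0)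
            + (MT*l^2) * deriv q s 2 := by
      funext s; simp [Imat, Fin.sum_univ_three]; ring
    have H1 := ((hc02.mul (hw 0)).const_mul (MT*l*r)).add
        ((hw 2).const_mul (MT*l^2))
    have e2 : (fun a => ∑ i', ∑ j,
          Imat m MH MT l r (Function.update (q t) (2 : Fin 3) a) i' j
            * deriv q t i' * deriv q t j)
        = fun a => (((4*MH + 4*MT + 5*m)*r^2/4) * deriv q t 0 * deriv q t 0
              + m*r^2/4 * deriv q t 1 * deriv q t 1 + MT*l^2 * deriv q t 2 * deriv q t 2
              + (-(m*r^2)) * Real.cos (q t 0 - q t 1) * (deriv q t 0 * deriv q t 1))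
            + (2*MT*l*r * (deriv q t 0 * deriv q t 2)) * Real.cos (q t 0 - a) := by
      funext a; simp [Imat, Fin.sum_univ_three, Function.update]; ring
    have hca2 : HasDerivAt (fun a => Real.cos (q t 0 - a))
        (-Real.sin (q t 0 - q t 2) * (-1)) (q t 2) :=
      ((hasDerivAt_id (q t 2)).const_sub (q t 0)).cos
    have H2 := (hasDerivAt_const (q t 2)
          (((4*MH + 4*MT + 5*m)*r^2/4) * deriv q t 0 * deriv q t 0
              + m*r^2/4 * deriv q t 1 * deriv q t 1
              + MT*l^2 * deriv q t 2 * deriv q t 2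
              + (-(m*r^2)) * Real.cos (q t 0 - q t 1) * (deriv q t 0 * deriv q t 1))).add
        (hca2.const_mul (2*MT*l*r * (deriv q t 0 * deriv q t 2)))
    simp only [Pi.add_def, Pi.mul_def] at H1 H2
    rw [e1, H1.deriv, e2, H2.deriv]
    simp [Imat, Gammamat, Fin.sum_univ_three]
    ring
end
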